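/- Let 1 → N → G → Q → 1 be an extension of profinite groups in which Q is a free profinite group. Then the extension splits: there exists a continuous homomorphism s : Q → G with π ∘ s = id_Q. -/

import Mathlib

/-- `Q` is a free profinite group on the subset `S`: `S` converges to `1`, and every map
from `S` to a profinite group `G` converging to `1` extends uniquely to a continuous
homomorphism `Q →* G`. -/
def IsFreeProfiniteOn (Q : Type) [Group Q] [TopologicalSpace Q] [IsTopologicalGroup Q]
    [CompactSpace Q] [T2Space Q] [TotallyDisconnectedSpace Q] (S : Set Q) : Prop :=
  (∀ U ∈ nhds (1 : Q), {x ∈ S | x ∉ U}.Finite) ∧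
  ∀ (G : Type) [Group G] [TopologicalSpace G] [IsTopologicalGroup G]
    [CompactSpace G] [T2Space G] [TotallyDisconnectedSpace G]
    (f : S → G), (∀ U ∈ nhds (1 : G), {x : S | f x ∉ U}.Finite) →
      ∃! φ : Q →* G, Continuous φ ∧ ∀ x : S, φ x = f x

section Aux

open Set Pointwise

/-- Auxiliary structure: an "approximate section mod `K`" of `π` over `S`. -/
structure AuxSec {G : Type} [Group G] [TopologicalSpace G]
    {Q : Type} [Group Q] (π : G →* Q) (S : Set Q) where
  K : Subgroup G
  f : S → G
  hKker : K ≤ π.ker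
  hKnormal : K.Normal
  hKclosed : IsClosed (K : Set G)
  hsec : ∀ x : S, π (f x) = (x : Q)
  hconv : ∀ V : Subgroup G, V.Normal → IsOpen (V : Set G) →
    {x : S | f x ∉ (V : Set G) * (K : Set G)}.Finite

variable {G : Type} [Group G] [TopologicalSpace G] [IsTopologicalGroup G]
  [CompactSpace G] [T2Space G] [TotallyDisconnectedSpace G]

lemma exists_openNormal_subset_nhds {U : Set G} (hU : U ∈ nhds (1 : G)) :
    ∃ H : OpenNormalSubgroup G, (H : Set G) ⊆ U := by
  obtain ⟨W, ⟨h1W, hWclopen⟩, hWU⟩ := (nhds_basis_clopen (1 : G)).mem_iff.mp hU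
  obtain ⟨H, hH⟩ := IsTopologicalGroup.exist_openNormalSubgroup_sub_clopen_nhds_of_one hWclopen h1W
  exact ⟨H, fun g hg => hWU (hH hg)⟩

/-- The key construction: a set-theoretic section of `π` over `S` converging to `1`. -/
lemma exists_conv_section {Q : Type} [Group Q] [TopologicalSpace Q] [IsTopologicalGroup Q]
    [CompactSpace Q] [T2Space Q] [TotallyDisconnectedSpace Q]
    (π : G →* Q) (hπc : Continuous π) (hπs : Function.Surjective π)
    (S : Set Q) (hS : ∀ U ∈ nhds (1 : Q), {x ∈ S | x ∉ U}.Finite) :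
    ∃ f : S → G, (∀ x : S, π (f x) = (x : Q)) ∧
      ∀ U ∈ nhds (1 : G), {x : S | f x ∉ U}.Finite := by
  classical
  -- a set-theoretic preimage choice
  have hf0 : ∀ x : S, ∃ g : G, π g = (x : Q) := fun x => hπs x
  set f0 : S → G := fun x => (hf0 x).choose with hf0def
  have hf0spec : ∀ x : S, π (f0 x) = (x : Q) := fun x => (hf0 x).choose_spec
  -- initial element of the Zorn poset
  have hkerN : (π.ker : Subgroup G).Normal := by infer_instance
  have a0 : AuxSec π S := by
    refine ⟨π.ker, f0, le_rfl, hkerN, ?_, hf0spec, ?_⟩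
    · have : (π.ker : Set G) = π ⁻¹' {1} := rfl
      rw [this]
      exact isClosed_singleton.preimage hπc
    · intro V hVn hVo
      set A : Subgroup G := V ⊔ π.ker with hA
      have hAopen : IsOpen (A : Set G) := Subgroup.isOpen_mono le_sup_left hVo
      have hAker : π.ker ≤ A := le_sup_right
      -- the image of A is open in Q
      have hTc : (π '' (A : Set G))ᶜ = π '' ((A : Set G)ᶜ) := by
        ext q
        constructor
        · intro hq
          obtain ⟨g, hg⟩ := hπs q
          refine ⟨g, ?_, hg⟩
          intro hgA
          exact hq ⟨g, hgA, hg⟩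
        · rintro ⟨g, hg, rfl⟩ ⟨a, haA, ha⟩
          apply hg
          have : a⁻¹ * g ∈ π.ker := by
            rw [MonoidHom.mem_ker, map_mul, map_inv, ha, inv_mul_cancel]
          have : a * (a⁻¹ * g) ∈ A := mul_mem haA (hAker this)
          simpa [mul_assoc] using this
      have hTopen : IsOpen (π '' (A : Set G)) := by
        rw [← isClosed_compl_iff, hTc]
        exact ((hAopen.isClosed_compl.isCompact).image hπc).isClosed
      have hTnhds : π '' (A : Set G) ∈ nhds (1 : Q) :=
        hTopen.mem_nhds ⟨1, one_mem A, map_one π⟩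
      have hfin := hS _ hTnhds
      have hfin2 : {x : S | (x : Q) ∉ π '' (A : Set G)}.Finite := by
        have : {x : S | (x : Q) ∉ π '' (A : Set G)} =
            Subtype.val ⁻¹' {x ∈ S | x ∉ π '' (A : Set G)} := by
          ext x; simp [x.2]
        rw [this]
        exact hfin.preimage Subtype.val_injective.injOn
      refine hfin2.subset ?_
      intro x hx
      simp only [Set.mem_setOf_eq] at hx ⊢
      intro hxT
      apply hx
      obtain ⟨a, haA, ha⟩ := hxT
      have haVK : a ∈ (V : Set G) * (π.ker : Set G) := by
        rw [← Subgroup.mul_normal V π.ker]; exact haA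
      obtain ⟨v, hv, n, hn, hvn⟩ := Set.mem_mul.mp haVK
      have hmem : a⁻¹ * f0 x ∈ π.ker := by
        rw [MonoidHom.mem_ker, map_mul, map_inv, ha, hf0spec x, inv_mul_cancel]
      have : f0 x = v * (n * (a⁻¹ * f0 x)) := by
        rw [← mul_assoc, hvn, mul_inv_cancel_left]
      rw [this]
      exact Set.mul_mem_mul hv (mul_mem hn hmem)
  -- the Zorn relation
  set r : AuxSec π S → AuxSec π S → Prop :=
    fun a b => b.K ≤ a.K ∧ ∀ x : S, (a.f x)⁻¹ * b.f x ∈ a.K with hr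
  have htrans : ∀ {a b c : AuxSec π S}, r a b → r b c → r a c := by
    rintro a b c ⟨hK1, hf1⟩ ⟨hK2, hf2⟩
    refine ⟨hK2.trans hK1, fun x => ?_⟩
    have : (a.f x)⁻¹ * c.f x = ((a.f x)⁻¹ * b.f x) * ((b.f x)⁻¹ * c.f x) := by group
    rw [this]
    exact mul_mem (hf1 x) (hK1 (hf2 x))
  -- chains are bounded
  have hchain : ∀ c : Set (AuxSec π S), IsChain r c → ∃ ub, ∀ a ∈ c, r a ub := by
    intro c hc
    rcases c.eq_empty_or_nonempty with rfl | ⟨a1, ha1⟩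
    · exact ⟨a0, by simp⟩
    haveI : Nonempty c := ⟨⟨a1, ha1⟩⟩
    -- the fiber-coset sets
    set t : S → c → Set G :=
      fun x i => {g : G | π g = (x : Q) ∧ ((i : AuxSec π S).f x)⁻¹ * g ∈ (i : AuxSec π S).K}
      with ht
    have hmono : ∀ (x : S) (i j : c), r (i : AuxSec π S) (j : AuxSec π S) → t x j ⊆ t x i := by
      rintro x i j ⟨hK, hf⟩ g ⟨hg1, hg2⟩
      refine ⟨hg1, ?_⟩
      have : ((i : AuxSec π S).f x)⁻¹ * g =
          (((i : AuxSec π S).f x)⁻¹ * (j : AuxSec π S).f x) * (((j : AuxSec π S).f x)⁻¹ * g) := by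
        group
      rw [this]
      exact mul_mem (hf x) (hK hg2)
    have hdir : ∀ x : S, Directed (fun x1 x2 => x1 ⊇ x2) (t x) := by
      intro x i j
      by_cases hij : (i : AuxSec π S) = (j : AuxSec π S)
      · refine ⟨j, ?_, fun g hg => hg⟩
        have heq : t x i = t x j := by simp only [ht, hij]
        rw [heq]
      rcases hc i.2 j.2 hij with h | h
      · exact ⟨j, hmono x i j h, fun g hg => hg⟩
      · exact ⟨i, fun g hg => hg, hmono x j i h⟩
    have htne : ∀ (x : S) (i : c), (t x i).Nonempty :=
      fun x i => ⟨(i : AuxSec π S).f x, (i : AuxSec π S).hsec x,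
        by rw [inv_mul_cancel]; exact one_mem _⟩
    have htcl : ∀ (x : S) (i : c), IsClosed (t x i) := by
      intro x i
      exact (isClosed_singleton.preimage hπc).inter
        ((i : AuxSec π S).hKclosed.preimage (continuous_const.mul continuous_id))
    have hne : ∀ x : S, (⋂ i : c, t x i).Nonempty := by
      intro x
      exact IsCompact.nonempty_iInter_of_directed_nonempty_isCompact_isClosed
        (t x) (hdir x) (htne x) (fun i => (htcl x i).isCompact) (htcl x)
    set F : S → G := fun x => (hne x).choose with hF
    have hFspec : ∀ (x : S) (i : c), F x ∈ t x i := by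
      intro x i
      have := (hne x).choose_spec
      rw [Set.mem_iInter] at this
      exact this i
    set Kinf : Subgroup G := ⨅ i : c, (i : AuxSec π S).K with hKinf
    have hKinfle : ∀ i : c, Kinf ≤ (i : AuxSec π S).K := fun i => iInf_le _ i
    have hKinfmem : ∀ {g : G}, g ∈ Kinf ↔ ∀ i : c, g ∈ (i : AuxSec π S).K :=
      fun {g} => Subgroup.mem_iInf
    refine ⟨⟨Kinf, F, ?_, ?_, ?_, ?_, ?_⟩, ?_⟩
    · exact (hKinfle ⟨a1, ha1⟩).trans a1.hKker
    · exact ⟨fun n hn g => hKinfmem.mpr fun i =>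
        (i : AuxSec π S).hKnormal.conj_mem n (hKinfmem.mp hn i) g⟩
    · rw [hKinf, Subgroup.coe_iInf]
      exact isClosed_iInter fun i => (i : AuxSec π S).hKclosed
    · exact fun x => (hFspec x ⟨a1, ha1⟩).1
    · -- convergence for the upper bound
      intro V hVn hVo
      -- find i with (i.K : Set G) ⊆ V * Kinf
      have hVKopen : IsOpen ((V : Set G) * (Kinf : Set G)) := hVo.mul_right
      have hex : ∃ i : c, ((i : AuxSec π S).K : Set G) ⊆ (V : Set G) * (Kinf : Set G) := by
        by_contra hcon
        push_neg at hcon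
        set s : c → Set G :=
          fun i => ((i : AuxSec π S).K : Set G) ∩ ((V : Set G) * (Kinf : Set G))ᶜ with hs
        have hsne : ∀ i : c, (s i).Nonempty := by
          intro i
          obtain ⟨g, hg1, hg2⟩ := Set.not_subset.mp (hcon i)
          exact ⟨g, hg1, hg2⟩
        have hscl : ∀ i : c, IsClosed (s i) :=
          fun i => (i : AuxSec π S).hKclosed.inter hVKopen.isClosed_compl
        have hsdir : Directed (fun x1 x2 => x1 ⊇ x2) s := by
          intro i j
          by_cases hij : (i : AuxSec π S) = (j : AuxSec π S)
          · refine ⟨j, ?_, fun g hg => hg⟩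
            have heq : s i = s j := by simp only [hs, hij]
            rw [heq]
          rcases hc i.2 j.2 hij with h | h
          · exact ⟨j, fun g hg => ⟨h.1 hg.1, hg.2⟩, fun g hg => hg⟩
          · exact ⟨i, fun g hg => hg, fun g hg => ⟨h.1 hg.1, hg.2⟩⟩
        have := IsCompact.nonempty_iInter_of_directed_nonempty_isCompact_isClosed
          s hsdir hsne (fun i => (hscl i).isCompact) hscl
        obtain ⟨g, hg⟩ := this
        rw [Set.mem_iInter] at hg
        have hgK : g ∈ Kinf := hKinfmem.mpr fun i => (hg i).1
        have : g ∈ (V : Set G) * (Kinf : Set G) :=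
          ⟨1, one_mem V, g, hgK, one_mul g⟩
        exact (hg ⟨a1, ha1⟩).2 this
      obtain ⟨i, hi⟩ := hex
      have hfin := (i : AuxSec π S).hconv V hVn hVo
      refine hfin.subset ?_
      intro x hx
      simp only [Set.mem_setOf_eq] at hx ⊢
      intro hmem
      apply hx
      obtain ⟨v, hv, k, hk, hvk⟩ := Set.mem_mul.mp hmem
      have hFk : ((i : AuxSec π S).f x)⁻¹ * F x ∈ (i : AuxSec π S).K := (hFspec x i).2
      -- F x = (v*k) * ((i.f x)⁻¹ * F x)  with k * (...) ∈ i.K ⊆ V * Kinf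
      have hk2 : k * (((i : AuxSec π S).f x)⁻¹ * F x) ∈ (i : AuxSec π S).K :=
        mul_mem hk hFk
      obtain ⟨v2, hv2, k2, hk2', hvk2⟩ := Set.mem_mul.mp (hi hk2)
      have : F x = (v * v2) * k2 := by
        rw [mul_assoc, hvk2, ← mul_assoc, hvk, mul_inv_cancel_left]
      rw [this]
      exact Set.mul_mem_mul (mul_mem hv hv2) hk2'
    · -- upper bound property
      intro a ha
      exact ⟨hKinfle ⟨a, ha⟩, fun x => (hFspec x ⟨a, ha⟩).2⟩
  obtain ⟨m, hm⟩ := exists_maximal_of_chains_bounded hchain htrans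
  -- maximality forces m.K ≤ V for every open normal V
  have hKle : ∀ V : Subgroup G, V.Normal → IsOpen (V : Set G) → m.K ≤ V := by
    intro V hVn hVo
    set f' : S → G := fun x =>
      if h : m.f x ∈ (V : Set G) * (m.K : Set G) then (Set.mem_mul.mp h).choose else m.f x
      with hf'
    have hf'spec : ∀ x : S, m.f x ∈ (V : Set G) * (m.K : Set G) →
        f' x ∈ (V : Set G) ∧ ∃ k ∈ (m.K : Set G), f' x * k = m.f x := by
      intro x h
      simp only [hf']
      rw [dif_pos h]
      obtain ⟨hv, k, hk, hvk⟩ := (Set.mem_mul.mp h).choose_spec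
      exact ⟨hv, k, hk, hvk⟩
    have hKV : (m.K ⊓ V).Normal :=
      ⟨fun n hn g => ⟨m.hKnormal.conj_mem n hn.1 g, hVn.conj_mem n hn.2 g⟩⟩
    have hclosed' : IsClosed ((m.K ⊓ V : Subgroup G) : Set G) := by
      rw [Subgroup.coe_inf]
      exact m.hKclosed.inter (Subgroup.isClosed_of_isOpen V hVo)
    have hsec' : ∀ x : S, π (f' x) = (x : Q) := by
      intro x
      by_cases h : m.f x ∈ (V : Set G) * (m.K : Set G)
      · obtain ⟨hv, k, hk, hvk⟩ := hf'spec x h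
        have hkker : π k = 1 := m.hKker hk
        have := congrArg π hvk
        rw [map_mul, hkker, mul_one] at this
        rw [this, m.hsec x]
      · simp only [hf', dif_neg h]; exact m.hsec x
    have hconv' : ∀ W : Subgroup G, W.Normal → IsOpen (W : Set G) →
        {x : S | f' x ∉ (W : Set G) * ((m.K ⊓ V : Subgroup G) : Set G)}.Finite := by
      intro W hWn hWo
      have hW'n : (W ⊓ V).Normal :=
        ⟨fun n hn g => ⟨hWn.conj_mem n hn.1 g, hVn.conj_mem n hn.2 g⟩⟩
      have hW'o : IsOpen ((W ⊓ V : Subgroup G) : Set G) := by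
        rw [Subgroup.coe_inf]; exact hWo.inter hVo
      have hfin1 := m.hconv (W ⊓ V) hW'n hW'o
      have hfin2 := m.hconv V hVn hVo
      refine (hfin1.union hfin2).subset ?_
      intro x hx
      simp only [Set.mem_setOf_eq, Set.mem_union] at hx ⊢
      by_contra hcon
      push_neg at hcon
      obtain ⟨h1, h2⟩ := hcon
      apply hx
      obtain ⟨hfv, k, hk, hvk⟩ := hf'spec x h2
      obtain ⟨w, hw, k1, hk1, hwk⟩ := Set.mem_mul.mp h1
      -- f' x = w * (w⁻¹ * f' x) with w⁻¹ * f' x ∈ m.K ⊓ V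
      have hwWV : w ∈ W ⊓ V := hw
      have hwW : w ∈ W := (Subgroup.mem_inf.mp hwWV).1
      have hwV : w ∈ V := (Subgroup.mem_inf.mp hwWV).2
      have hwf : w⁻¹ * f' x ∈ (m.K ⊓ V : Subgroup G) := by
        rw [Subgroup.mem_inf]
        constructor
        · -- w⁻¹ * f' x = k1 * k⁻¹
          have : w⁻¹ * f' x = k1 * k⁻¹ := by
            have h3 : f' x = m.f x * k⁻¹ := by rw [← hvk, mul_inv_cancel_right]
            rw [h3, ← hwk]; group
          rw [this]
          exact mul_mem hk1 (inv_mem hk)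
        · exact mul_mem (inv_mem hwV) hfv
      have : f' x = w * (w⁻¹ * f' x) := by group
      rw [this]
      exact Set.mul_mem_mul hwW hwf
    set ha' : AuxSec π S :=
      ⟨m.K ⊓ V, f', inf_le_left.trans m.hKker, hKV, hclosed', hsec', hconv'⟩ with hha'
    have hrma : r m ha' := by
      refine ⟨inf_le_left, fun x => ?_⟩
      by_cases h : m.f x ∈ (V : Set G) * (m.K : Set G)
      · obtain ⟨hv, k, hk, hvk⟩ := hf'spec x h
        have : (m.f x)⁻¹ * f' x = k⁻¹ := by rw [← hvk]; group
        rw [this]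
        exact inv_mem hk
      · show (m.f x)⁻¹ * f' x ∈ m.K
        simp only [hf', dif_neg h, inv_mul_cancel]
        exact one_mem m.K
    exact (hm ha' hrma).1.trans inf_le_right
  -- conclude
  refine ⟨m.f, m.hsec, ?_⟩
  intro U hU
  obtain ⟨H, hH⟩ := exists_openNormal_subset_nhds hU
  have hKH : m.K ≤ H.toSubgroup :=
    hKle H.toSubgroup H.isNormal' H.toOpenSubgroup.isOpen'
  have hfin := m.hconv H.toSubgroup H.isNormal' H.toOpenSubgroup.isOpen'
  refine hfin.subset ?_
  intro x hx
  simp only [Set.mem_setOf_eq] at hx ⊢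
  intro hmem
  apply hx
  obtain ⟨v, hv, k, hk, hvk⟩ := Set.mem_mul.mp hmem
  exact hH (by rw [← hvk]; exact mul_mem hv (hKH hk))

end Aux

/-- An extension `1 → N → G → Q → 1` of profinite groups with `Q` free profinite splits:
there is a continuous homomorphism `s : Q → G` with `π ∘ s = id`. -/
theorem extension_by_free_profinite_splits
    (G : Type) [Group G] [TopologicalSpace G] [IsTopologicalGroup G]
    [CompactSpace G] [T2Space G] [TotallyDisconnectedSpace G]
    (Q : Type) [Group Q] [TopologicalSpace Q] [IsTopologicalGroup Q]
    [CompactSpace Q] [T2Space Q] [TotallyDisconnectedSpace Q]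
    (N : Subgroup G) (π : G →* Q) (hπcont : Continuous π)
    (hπsurj : Function.Surjective π) (hker : π.ker = N)
    (hfree : ∃ S : Set Q, IsFreeProfiniteOn Q S) :
    ∃ s : Q →* G, Continuous s ∧ ∀ q : Q, π (s q) = q := by
  obtain ⟨S, hconv1, huniv⟩ := hfree
  obtain ⟨f, hfsec, hfconv⟩ := exists_conv_section π hπcont hπsurj S hconv1
  obtain ⟨φ, ⟨hφcont, hφx⟩, -⟩ := huniv G f hfconv
  -- uniqueness of extensions of the inclusion S → Q
  have hvalconv : ∀ U ∈ nhds (1 : Q), {x : S | (x : Q) ∉ U}.Finite := by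
    intro U hU
    have : {x : S | (x : Q) ∉ U} = Subtype.val ⁻¹' {x ∈ S | x ∉ U} := by
      ext x; simp [x.2]
    rw [this]
    exact (hconv1 U hU).preimage Subtype.val_injective.injOn
  obtain ⟨ψ, -, hψuniq⟩ := huniv Q (fun x => (x : Q)) hvalconv
  have h1 : π.comp φ = ψ := hψuniq (π.comp φ)
    ⟨hπcont.comp hφcont, fun x => by simp [hφx x, hfsec x]⟩
  have h2 : MonoidHom.id Q = ψ := hψuniq (MonoidHom.id Q) ⟨continuous_id, fun x => rfl⟩
  refine ⟨φ, hφcont, fun q => ?_⟩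
  have := h1.trans h2.symm
  exact DFunLike.congr_fun this q
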